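/- Let G be a finite group of linear maps on ℝ^d with ‖gx‖_∞ ≤ 1 for all g ∈ G and x ∈ Ω, and let S = (x₁,…,x_M) ⊆ Ω. Define ℳ_R = { x ↦ ∑_{p=1}^{K} â_p 𝒢ReLU(ŵ_p·x + b̂_p) : K ≥ 1, ∑_p |â_p|(‖ŵ_p‖₁+|b̂_p|) ≤ R }, where 𝒢ReLU(w·x+b) = (1/|G|)∑_{g∈G} ReLU(w·gx+b). Then R̂_S(ℳ_R) ≤ 2√2 · R · √(2 log(2d+2)/M). -/

import Mathlib

open Finset Real

noncomputable def sg {M : ℕ} (ξ : Fin M → Bool) (i : Fin M) : ℝ := if ξ i then 1 else -1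

lemma sg_abs {M : ℕ} (ξ : Fin M → Bool) (i : Fin M) : |sg ξ i| = 1 := by
  unfold sg; split <;> simp

lemma bddAbove_range_of_le {T : Type*} {f : T → ℝ} {C : ℝ} (h : ∀ t, f t ≤ C) :
    BddAbove (Set.range f) := ⟨C, by rintro _ ⟨t, rfl⟩; exact h t⟩

lemma sum_pi_bool {n : ℕ} (f : Fin n → Bool → ℝ) :
    ∑ ξ : Fin n → Bool, ∏ i, f i (ξ i) = ∏ i, (f i true + f i false) := by
  have : ∏ i, (f i true + f i false) = ∏ i, ∑ b : Bool, f i b := by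
    simp [Fintype.sum_bool, add_comm]
  rw [this, Finset.prod_univ_sum, Fintype.piFinset_univ]

lemma avg_exp_eq_prod_cosh {n : ℕ} (c : ℝ) (v : Fin n → ℝ) :
    ∑ ξ : Fin n → Bool, Real.exp (c * ∑ i, sg ξ i * v i)
      = 2 ^ n * ∏ i, Real.cosh (c * v i) := by
  have h1 : ∀ ξ : Fin n → Bool, Real.exp (c * ∑ i, sg ξ i * v i)
      = ∏ i, (fun i (b : Bool) => Real.exp (c * ((if b then (1:ℝ) else -1) * v i))) i (ξ i) := by
    intro ξ; rw [← Real.exp_sum, Finset.mul_sum]; rfl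
  simp only [h1]
  rw [sum_pi_bool (fun i (b : Bool) => Real.exp (c * ((if b then (1:ℝ) else -1) * v i)))]
  norm_num
  have h2 : ∀ i : Fin n, Real.exp (c * v i) + Real.exp (-(c * v i))
      = 2 * Real.cosh (c * v i) := fun i => by rw [Real.cosh_eq]; ring
  simp only [h2]
  rw [Finset.prod_mul_distrib]
  simp

lemma sup_two_point {T : Type*} [Nonempty T] (r p q : T → ℝ)
    (hpq : ∀ t s, |p t - p s| ≤ |q t - q s|)
    (hbq : BddAbove (Set.range fun t => r t + q t))
    (hbq' : BddAbove (Set.range fun t => r t - q t)) :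
    sSup (Set.range fun t => r t + p t) + sSup (Set.range fun t => r t - p t)
      ≤ sSup (Set.range fun t => r t + q t) + sSup (Set.range fun t => r t - q t) := by
  set C := sSup (Set.range fun t => r t + q t) + sSup (Set.range fun t => r t - q t) with hC
  have key : ∀ t s, (r t + p t) + (r s - p s) ≤ C := by
    intro t s
    have h1 : p t - p s ≤ |q t - q s| := (le_abs_self _).trans (hpq t s)
    rcases le_total (q s) (q t) with hq | hq
    · have h2 : |q t - q s| = q t - q s := abs_of_nonneg (by linarith)
      have h3 : r t + q t ≤ sSup (Set.range fun t => r t + q t) :=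
        le_csSup hbq ⟨t, rfl⟩
      have h4 : r s - q s ≤ sSup (Set.range fun t => r t - q t) :=
        le_csSup hbq' ⟨s, rfl⟩
      rw [h2] at h1; linarith
    · have h2 : |q t - q s| = q s - q t := by rw [abs_sub_comm]; exact abs_of_nonneg (by linarith)
      have h3 : r s + q s ≤ sSup (Set.range fun t => r t + q t) :=
        le_csSup hbq ⟨s, rfl⟩
      have h4 : r t - q t ≤ sSup (Set.range fun t => r t - q t) :=
        le_csSup hbq' ⟨t, rfl⟩
      rw [h2] at h1; linarith
  have h5 : sSup (Set.range fun t => r t + p t) ≤ C - sSup (Set.range fun t => r t - p t) := by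
    apply csSup_le (Set.range_nonempty _)
    rintro _ ⟨t, rfl⟩
    show r t + p t ≤ C - sSup (Set.range fun t => r t - p t)
    rw [le_sub_iff_add_le, add_comm, ← le_sub_iff_add_le]
    apply csSup_le (Set.range_nonempty _)
    rintro _ ⟨s, rfl⟩
    show r s - p s ≤ C - (r t + p t)
    linarith [key t s]
  linarith

lemma contraction_step {M : ℕ} {T : Type*} [Nonempty T] (u : Fin M → T → ℝ)
    (hu : ∀ i t, |u i t| ≤ 1) (φ : ℝ → ℝ) (hφ : ∀ a b, |φ a - φ b| ≤ |a - b|)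
    (hφ0 : φ 0 = 0) (A : Finset (Fin M)) (k : Fin M) (hk : k ∉ A) :
    ∑ ξ : Fin M → Bool, sSup (Set.range fun t =>
        ∑ i, sg ξ i * (if i ∈ A then u i t else φ (u i t)))
      ≤ ∑ ξ : Fin M → Bool, sSup (Set.range fun t =>
        ∑ i, sg ξ i * (if i ∈ insert k A then u i t else φ (u i t))) := by
  classical
  set ψ : Fin M → T → ℝ := fun i t => if i ∈ A then u i t else φ (u i t) with hψ
  set ψ' : Fin M → T → ℝ := fun i t => if i ∈ insert k A then u i t else φ (u i t) with hψ'
  have hφb : ∀ x, |φ x| ≤ |x| := fun x => by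
    have := hφ x 0; rwa [hφ0, sub_zero, sub_zero] at this
  -- flip map
  set flip : (Fin M → Bool) → (Fin M → Bool) := fun ξ => Function.update ξ k (!ξ k) with hflip
  have hinv : Function.Involutive flip := by
    intro ξ; funext i
    by_cases hik : i = k
    · subst hik; simp [hflip, Function.update_self]
    · simp [hflip, Function.update_of_ne hik]
  have hsum : ∀ h : (Fin M → Bool) → ℝ, ∑ ξ, h (flip ξ) = ∑ ξ, h ξ :=
    fun h => Fintype.sum_bijective flip hinv.bijective _ _ (fun ξ => rfl)
  -- sign facts
  have hsgflip_ne : ∀ ξ (i : Fin M), i ≠ k → sg (flip ξ) i = sg ξ i := by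
    intro ξ i hik; simp [sg, hflip, Function.update_of_ne hik]
  have hsgflip_k : ∀ ξ, sg (flip ξ) k = -(sg ξ k) := by
    intro ξ; simp only [sg, hflip, Function.update_self]
    cases h : ξ k <;> simp [h]
  -- pointwise two-point bound
  have pointwise : ∀ ξ, sSup (Set.range fun t => ∑ i, sg ξ i * ψ i t)
      + sSup (Set.range fun t => ∑ i, sg (flip ξ) i * ψ i t)
      ≤ sSup (Set.range fun t => ∑ i, sg ξ i * ψ' i t)
      + sSup (Set.range fun t => ∑ i, sg (flip ξ) i * ψ' i t) := by
    intro ξ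
    set r : T → ℝ := fun t => ∑ i ∈ univ.erase k, sg ξ i * ψ i t with hr
    set p : T → ℝ := fun t => sg ξ k * φ (u k t) with hp
    set q : T → ℝ := fun t => sg ξ k * u k t with hq
    have hψk : ∀ t, ψ k t = φ (u k t) := fun t => by simp [hψ, hk]
    have hψ'k : ∀ t, ψ' k t = u k t := fun t => by simp [hψ']
    have hψeq : ∀ (i : Fin M), i ≠ k → ∀ t, ψ' i t = ψ i t := by
      intro i hik t; simp only [hψ, hψ', Finset.mem_insert]
      by_cases hiA : i ∈ A <;> simp [hiA, hik]
    have e1 : (fun t => ∑ i, sg ξ i * ψ i t) = fun t => r t + p t := by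
      funext t
      rw [← Finset.sum_erase_add univ _ (mem_univ k), hψk, hr]
    have e2 : (fun t => ∑ i, sg (flip ξ) i * ψ i t) = fun t => r t - p t := by
      funext t
      rw [← Finset.sum_erase_add univ _ (mem_univ k), hψk]
      have : ∑ i ∈ univ.erase k, sg (flip ξ) i * ψ i t = r t :=
        Finset.sum_congr rfl (fun i hi => by
          rw [hsgflip_ne ξ i (Finset.mem_erase.1 hi).1])
      rw [this, hsgflip_k, hp]; ring
    have e3 : (fun t => ∑ i, sg ξ i * ψ' i t) = fun t => r t + q t := by
      funext t
      rw [← Finset.sum_erase_add univ _ (mem_univ k), hψ'k]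
      have : ∑ i ∈ univ.erase k, sg ξ i * ψ' i t = r t :=
        Finset.sum_congr rfl (fun i hi => by
          rw [hψeq i (Finset.mem_erase.1 hi).1])
      rw [this, hq]
    have e4 : (fun t => ∑ i, sg (flip ξ) i * ψ' i t) = fun t => r t - q t := by
      funext t
      rw [← Finset.sum_erase_add univ _ (mem_univ k), hψ'k]
      have : ∑ i ∈ univ.erase k, sg (flip ξ) i * ψ' i t = r t :=
        Finset.sum_congr rfl (fun i hi => by
          rw [hψeq i (Finset.mem_erase.1 hi).1, hsgflip_ne ξ i (Finset.mem_erase.1 hi).1])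
      rw [this, hsgflip_k, hq]; ring
    have hrb : ∀ t, |r t| ≤ ((univ.erase k).card : ℝ) := by
      intro t
      calc |r t| ≤ ∑ i ∈ univ.erase k, |sg ξ i * ψ i t| := Finset.abs_sum_le_sum_abs _ _
        _ ≤ ∑ _i ∈ univ.erase k, (1:ℝ) := by
            apply Finset.sum_le_sum
            intro i _
            rw [abs_mul, sg_abs, one_mul]
            simp only [hψ]
            split
            · exact hu i t
            · exact (hφb _).trans (hu i t)
        _ = ((univ.erase k).card : ℝ) := by simp
    have hqb : ∀ t, |q t| ≤ 1 := fun t => by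
      rw [hq]; simp only; rw [abs_mul, sg_abs, one_mul]; exact hu k t
    have hbq : BddAbove (Set.range fun t => r t + q t) :=
      bddAbove_range_of_le (C := ((univ.erase k).card : ℝ) + 1)
        (fun t => by have := hrb t; have := hqb t
                     have h1 := abs_le.1 (hrb t); have h2 := abs_le.1 (hqb t); linarith)
    have hbq' : BddAbove (Set.range fun t => r t - q t) :=
      bddAbove_range_of_le (C := ((univ.erase k).card : ℝ) + 1)
        (fun t => by have h1 := abs_le.1 (hrb t); have h2 := abs_le.1 (hqb t); linarith)
    have hpq : ∀ t s, |p t - p s| ≤ |q t - q s| := by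
      intro t s
      rw [hp, hq]; simp only
      rw [← mul_sub, ← mul_sub, abs_mul, abs_mul, sg_abs, one_mul, one_mul]
      exact hφ _ _
    rw [e1, e2, e3, e4]
    exact sup_two_point r p q hpq hbq hbq'
  -- sum over ξ, using the flip bijection
  have lhs_eq : ∑ ξ : Fin M → Bool, sSup (Set.range fun t => ∑ i, sg ξ i * ψ i t)
      = (2:ℝ)⁻¹ * ∑ ξ : Fin M → Bool, (sSup (Set.range fun t => ∑ i, sg ξ i * ψ i t)
        + sSup (Set.range fun t => ∑ i, sg (flip ξ) i * ψ i t)) := by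
    rw [Finset.sum_add_distrib,
      hsum (fun ξ => sSup (Set.range fun t => ∑ i, sg ξ i * ψ i t))]
    ring
  have rhs_eq : ∑ ξ : Fin M → Bool, sSup (Set.range fun t => ∑ i, sg ξ i * ψ' i t)
      = (2:ℝ)⁻¹ * ∑ ξ : Fin M → Bool, (sSup (Set.range fun t => ∑ i, sg ξ i * ψ' i t)
        + sSup (Set.range fun t => ∑ i, sg (flip ξ) i * ψ' i t)) := by
    rw [Finset.sum_add_distrib,
      hsum (fun ξ => sSup (Set.range fun t => ∑ i, sg ξ i * ψ' i t))]
    ring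
  rw [lhs_eq, rhs_eq]
  apply mul_le_mul_of_nonneg_left _ (by norm_num)
  exact Finset.sum_le_sum (fun ξ _ => pointwise ξ)

lemma contraction {M : ℕ} {T : Type*} [Nonempty T] (u : Fin M → T → ℝ)
    (hu : ∀ i t, |u i t| ≤ 1) (φ : ℝ → ℝ) (hφ : ∀ a b, |φ a - φ b| ≤ |a - b|)
    (hφ0 : φ 0 = 0) :
    ∑ ξ : Fin M → Bool, sSup (Set.range fun t => ∑ i, sg ξ i * φ (u i t))
      ≤ ∑ ξ : Fin M → Bool, sSup (Set.range fun t => ∑ i, sg ξ i * u i t) := by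
  classical
  have main : ∀ A : Finset (Fin M),
      ∑ ξ : Fin M → Bool, sSup (Set.range fun t => ∑ i, sg ξ i * φ (u i t))
        ≤ ∑ ξ : Fin M → Bool, sSup (Set.range fun t =>
          ∑ i, sg ξ i * (if i ∈ A then u i t else φ (u i t))) := by
    intro A
    induction A using Finset.induction_on with
    | empty => simp
    | @insert k A hk ih =>
        exact ih.trans (contraction_step u hu φ hφ hφ0 A k hk)
  have := main univ
  simpa using this

lemma massart {M : ℕ} (hM : 0 < M) {K : Type*} [Fintype K] [Nonempty K]
    (hK : 2 ≤ Fintype.card K) (v : K → Fin M → ℝ) (hv : ∀ κ i, |v κ i| ≤ 1) :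
    ∑ ξ : Fin M → Bool, Finset.univ.sup' Finset.univ_nonempty
        (fun κ => ∑ i, sg ξ i * v κ i)
      ≤ 2 ^ M * Real.sqrt (2 * M * Real.log (Fintype.card K)) := by
  set N : ℝ := (Fintype.card K : ℝ) with hNdef
  have hN1 : (1:ℝ) < N := by
    have h2 : (2:ℝ) ≤ N := by rw [hNdef]; exact_mod_cast hK
    linarith
  have hL : 0 < Real.log N := Real.log_pos hN1
  have hMR : (0:ℝ) < M := by exact_mod_cast hM
  set lam : ℝ := Real.sqrt (2 * Real.log N / M) with hlamdef
  have hlam : 0 < lam := Real.sqrt_pos.2 (by positivity)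
  have hlam2 : lam ^ 2 = 2 * Real.log N / M := Real.sq_sqrt (by positivity)
  set Z : K → (Fin M → Bool) → ℝ := fun κ ξ => ∑ i, sg ξ i * v κ i with hZdef
  set W : (Fin M → Bool) → ℝ := fun ξ => ∑ κ, Real.exp (lam * Z κ ξ) with hWdef
  have hWpos : ∀ ξ, 0 < W ξ := fun ξ =>
    Finset.sum_pos (fun κ _ => Real.exp_pos _) univ_nonempty
  -- step 1
  have step1 : ∀ ξ, lam * (Finset.univ.sup' Finset.univ_nonempty (fun κ => Z κ ξ))
      ≤ Real.log (W ξ) := by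
    intro ξ
    obtain ⟨κ₀, _, hκ₀⟩ := Finset.exists_mem_eq_sup' (Finset.univ_nonempty (α := K))
      (fun κ => Z κ ξ)
    rw [hκ₀]
    have h1 : Real.exp (lam * Z κ₀ ξ) ≤ W ξ :=
      Finset.single_le_sum (f := fun κ => Real.exp (lam * Z κ ξ))
        (fun κ _ => (Real.exp_pos _).le) (mem_univ κ₀)
    calc lam * Z κ₀ ξ = Real.log (Real.exp (lam * Z κ₀ ξ)) := (Real.log_exp _).symm
      _ ≤ Real.log (W ξ) := Real.log_le_log (Real.exp_pos _) h1
  -- step 3: average of W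
  have step3 : ∑ ξ, W ξ ≤ N * (2 ^ M * Real.exp (M * lam ^ 2 / 2)) := by
    rw [hWdef]
    rw [Finset.sum_comm]
    have hone : ∀ κ : K, ∑ ξ : Fin M → Bool, Real.exp (lam * Z κ ξ)
        ≤ 2 ^ M * Real.exp (M * lam ^ 2 / 2) := by
      intro κ
      rw [hZdef, avg_exp_eq_prod_cosh]
      have : ∏ i, Real.cosh (lam * v κ i) ≤ Real.exp (M * lam ^ 2 / 2) := by
        calc ∏ i, Real.cosh (lam * v κ i)
            ≤ ∏ i : Fin M, Real.exp (lam ^ 2 / 2) := by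
              apply Finset.prod_le_prod (fun i _ => (Real.cosh_pos _).le)
              intro i _
              calc Real.cosh (lam * v κ i) ≤ Real.exp ((lam * v κ i) ^ 2 / 2) :=
                    Real.cosh_le_exp_half_sq _
                _ ≤ Real.exp (lam ^ 2 / 2) := by
                    apply Real.exp_le_exp.2
                    have hv2 : (v κ i) ^ 2 ≤ 1 := by
                      nlinarith [hv κ i, abs_nonneg (v κ i), sq_abs (v κ i)]
                    have h6 : (lam * v κ i) ^ 2 ≤ lam ^ 2 := by
                      rw [mul_pow]; nlinarith [sq_nonneg lam]
                    nlinarith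
          _ = Real.exp (M * lam ^ 2 / 2) := by
              rw [Finset.prod_const, ← Real.exp_nat_mul]
              simp [mul_div_assoc]
      exact mul_le_mul_of_nonneg_left this (by positivity)
    calc ∑ κ : K, ∑ ξ : Fin M → Bool, Real.exp (lam * Z κ ξ)
        ≤ ∑ κ : K, (2 ^ M * Real.exp (M * lam ^ 2 / 2)) := Finset.sum_le_sum (fun κ _ => hone κ)
      _ = N * (2 ^ M * Real.exp (M * lam ^ 2 / 2)) := by
          rw [Finset.sum_const, card_univ, nsmul_eq_mul]
  -- step 2: Jensen
  have hcard : (Fintype.card (Fin M → Bool) : ℝ) = 2 ^ M := by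
    simp [Fintype.card_fun]
  have step2 : ∑ ξ, ((2:ℝ) ^ M)⁻¹ * Real.log (W ξ)
      ≤ Real.log (∑ ξ, ((2:ℝ) ^ M)⁻¹ * W ξ) := by
    have := (strictConcaveOn_log_Ioi.concaveOn).le_map_sum
      (t := (univ : Finset (Fin M → Bool))) (w := fun _ => ((2:ℝ) ^ M)⁻¹)
      (p := W) (fun ξ _ => by positivity)
      (by rw [Finset.sum_const, card_univ]; rw [nsmul_eq_mul, hcard]; field_simp)
      (fun ξ _ => Set.mem_Ioi.2 (hWpos ξ))
    simpa [smul_eq_mul] using this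
  -- combine
  have key : lam * ∑ ξ, (Finset.univ.sup' Finset.univ_nonempty (fun κ => Z κ ξ))
      ≤ 2 ^ M * (2 * Real.log N) := by
    have h1 : lam * ∑ ξ, (Finset.univ.sup' Finset.univ_nonempty (fun κ => Z κ ξ))
        ≤ ∑ ξ, Real.log (W ξ) := by
      rw [Finset.mul_sum]; exact Finset.sum_le_sum (fun ξ _ => step1 ξ)
    have h2 : ∑ ξ, Real.log (W ξ) ≤ 2 ^ M * Real.log (((2:ℝ) ^ M)⁻¹ * ∑ ξ, W ξ) := by
      have h := step2
      simp only [← Finset.mul_sum] at h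
      calc ∑ ξ, Real.log (W ξ)
          = 2 ^ M * (((2:ℝ) ^ M)⁻¹ * ∑ ξ, Real.log (W ξ)) := by field_simp
        _ ≤ 2 ^ M * Real.log (((2:ℝ) ^ M)⁻¹ * ∑ ξ, W ξ) := by
            apply mul_le_mul_of_nonneg_left h (by positivity)
    have h4 : Real.log (((2:ℝ) ^ M)⁻¹ * ∑ ξ, W ξ) ≤ 2 * Real.log N := by
      have hpos : (0:ℝ) < ((2:ℝ) ^ M)⁻¹ * ∑ ξ, W ξ := by
        apply mul_pos (by positivity)
        exact Finset.sum_pos (fun ξ _ => hWpos ξ) univ_nonempty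
      have h5 : ((2:ℝ) ^ M)⁻¹ * ∑ ξ, W ξ ≤ N * Real.exp (M * lam ^ 2 / 2) := by
        rw [inv_mul_le_iff₀ (by positivity)]
        calc ∑ ξ, W ξ ≤ N * (2 ^ M * Real.exp (M * lam ^ 2 / 2)) := step3
          _ = 2 ^ M * (N * Real.exp (M * lam ^ 2 / 2)) := by ring
      calc Real.log (((2:ℝ) ^ M)⁻¹ * ∑ ξ, W ξ)
          ≤ Real.log (N * Real.exp (M * lam ^ 2 / 2)) := Real.log_le_log hpos h5
        _ = Real.log N + M * lam ^ 2 / 2 := by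
            rw [Real.log_mul (by positivity) (Real.exp_pos _).ne', Real.log_exp]
        _ = 2 * Real.log N := by rw [hlam2]; field_simp; ring
    calc lam * ∑ ξ, (Finset.univ.sup' Finset.univ_nonempty (fun κ => Z κ ξ))
        ≤ ∑ ξ, Real.log (W ξ) := h1
      _ ≤ 2 ^ M * Real.log (((2:ℝ) ^ M)⁻¹ * ∑ ξ, W ξ) := h2
      _ ≤ 2 ^ M * (2 * Real.log N) := by
          apply mul_le_mul_of_nonneg_left h4 (by positivity)
  have hdiv : (2 * Real.log N) / lam = Real.sqrt (2 * M * Real.log N) := by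
    rw [div_eq_iff hlam.ne']
    rw [hlamdef, ← Real.sqrt_mul (by positivity)]
    rw [show (2 * (M:ℝ) * Real.log N) * (2 * Real.log N / M) = (2 * Real.log N)^2 by
      field_simp]
    exact (Real.sqrt_sq (by positivity : (0:ℝ) ≤ 2 * Real.log N)).symm
  have final : ∑ ξ, (Finset.univ.sup' Finset.univ_nonempty (fun κ => Z κ ξ))
      ≤ 2 ^ M * Real.sqrt (2 * M * Real.log N) :=
    calc ∑ ξ, (Finset.univ.sup' Finset.univ_nonempty (fun κ => Z κ ξ))
        ≤ (2 ^ M * (2 * Real.log N)) / lam := by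
          rw [le_div_iff₀ hlam, mul_comm]
          exact key
      _ = 2 ^ M * ((2 * Real.log N) / lam) := by ring
      _ = 2 ^ M * Real.sqrt (2 * M * Real.log N) := by rw [hdiv]
  exact final

/-- Empirical Rademacher complexity on a sample `x : Fin M → Ω`. -/
noncomputable def empRad {Ω : Type*} {M : ℕ} (F : Set (Ω → ℝ)) (x : Fin M → Ω) : ℝ :=
  (M : ℝ)⁻¹ * ((2 ^ M : ℝ)⁻¹ * ∑ ξ : Fin M → Bool,
    sSup ((fun f : Ω → ℝ => ∑ i, (if ξ i then (1 : ℝ) else -1) * f (x i)) '' F))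

/-- The class of `G`-averaged two-layer ReLU networks with path norm at most `R`. -/
def reluClassG {d : ℕ} (G : Type*) [Group G] [Fintype G] [MulAction G (Fin d → ℝ)]
    (R : ℝ) : Set ((Fin d → ℝ) → ℝ) :=
  {h | ∃ (K : ℕ) (_ : 1 ≤ K) (a : Fin K → ℝ) (w : Fin K → Fin d → ℝ) (b : Fin K → ℝ),
    (∑ p, |a p| * ((∑ j, |w p j|) + |b p|)) ≤ R ∧
    h = fun z => ∑ p, a p * ((Fintype.card G : ℝ)⁻¹ *
      ∑ g : G, max ((∑ j, w p j * (g • z) j) + b p) 0)}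

set_option maxHeartbeats 1000000 in
/-- Rademacher bound for the `G`-averaged ReLU class:
`R̂_S(ℳ_R) ≤ 2√2 · R · √(2 log(2d+2)/M)`. -/
theorem empRad_reluClassG_bound {d M : ℕ} (hM : 0 < M)
    {G : Type*} [Group G] [Fintype G] [MulAction G (Fin d → ℝ)]
    (hlin : ∀ g : G, IsLinearMap ℝ (fun z : Fin d → ℝ => g • z))
    (Ω : Set (Fin d → ℝ)) (hΩ : ∀ (g : G), ∀ z ∈ Ω, ∀ i, |(g • z) i| ≤ 1)
    (R : ℝ) (hR : 0 ≤ R)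
    (x : Fin M → Fin d → ℝ) (hx : ∀ i, x i ∈ Ω) :
    empRad (reluClassG G R) x ≤
      2 * Real.sqrt 2 * R * Real.sqrt (2 * Real.log (2 * d + 2) / M) := by
  classical
  have hMR : (0:ℝ) < M := by exact_mod_cast hM
  have hG : (0:ℝ) < (Fintype.card G : ℝ) := by exact_mod_cast Fintype.card_pos
  set y : G → Fin M → Fin d → ℝ := fun g i => g • x i with hy
  have hyb : ∀ g i j, |y g i j| ≤ 1 := fun g i j => hΩ g (x i) (hx i) j
  -- the unit-ball parameter space
  set T := {p : (Fin d → ℝ) × ℝ // (∑ j, |p.1 j|) + |p.2| ≤ 1} with hT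
  have : Nonempty T := ⟨⟨(0, 0), by simp⟩⟩
  -- single (group-element) neuron pre-activation
  set nrn : G → ((Fin d → ℝ) × ℝ) → Fin M → ℝ :=
    fun g p i => (∑ j, p.1 j * y g i j) + p.2 with hnrn
  have hnrnb : ∀ (g : G) (t : T) (i : Fin M), |nrn g t.1 i| ≤ 1 := by
    intro g t i
    calc |nrn g t.1 i| ≤ |∑ j, t.1.1 j * y g i j| + |t.1.2| := abs_add_le _ _
      _ ≤ (∑ j, |t.1.1 j|) + |t.1.2| := by
          apply add_le_add_left
          calc |∑ j, t.1.1 j * y g i j| ≤ ∑ j, |t.1.1 j * y g i j| :=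
                Finset.abs_sum_le_sum_abs _ _
            _ ≤ ∑ j, |t.1.1 j| := by
                apply Finset.sum_le_sum; intro j _
                rw [abs_mul]
                calc |t.1.1 j| * |y g i j| ≤ |t.1.1 j| * 1 :=
                      mul_le_mul_of_nonneg_left (hyb g i j) (abs_nonneg _)
                  _ = |t.1.1 j| := mul_one _
      _ ≤ 1 := t.2
  have hrelub : ∀ (g : G) (t : T) (i : Fin M), |max (nrn g t.1 i) 0| ≤ 1 := by
    intro g t i
    rw [abs_le]
    constructor
    · linarith [le_max_right (nrn g t.1 i) (0:ℝ)]
    · have := abs_le.1 (hnrnb g t i)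
      exact max_le this.2 (by norm_num)
  -- averaged neuron values
  set avgf : (Fin M → Bool) → T → ℝ :=
    fun ξ t => ∑ i, sg ξ i * ((Fintype.card G : ℝ)⁻¹ * ∑ g, max (nrn g t.1 i) 0) with havgf
  have havgb : ∀ ξ (t : T), |avgf ξ t| ≤ M := by
    intro ξ t
    calc |avgf ξ t| ≤ ∑ i, |sg ξ i * ((Fintype.card G : ℝ)⁻¹ * ∑ g, max (nrn g t.1 i) 0)| :=
          Finset.abs_sum_le_sum_abs _ _
      _ ≤ ∑ _i : Fin M, (1:ℝ) := by
          apply Finset.sum_le_sum; intro i _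
          rw [abs_mul, sg_abs, one_mul, abs_mul]
          rw [abs_of_nonneg (by positivity : (0:ℝ) ≤ ((Fintype.card G : ℝ))⁻¹)]
          rw [inv_mul_le_iff₀ hG, mul_one]
          calc |∑ g, max (nrn g t.1 i) 0| ≤ ∑ g, |max (nrn g t.1 i) 0| :=
                Finset.abs_sum_le_sum_abs _ _
            _ ≤ ∑ _g : G, (1:ℝ) := Finset.sum_le_sum (fun g _ => hrelub g t i)
            _ = (Fintype.card G : ℝ) := by simp
      _ = (M : ℝ) := by simp
  have havg_bdd : ∀ ξ, BddAbove (Set.range (avgf ξ)) :=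
    fun ξ => bddAbove_range_of_le (fun t => (abs_le.1 (havgb ξ t)).2)
  have habs_bdd : ∀ ξ, BddAbove (Set.range fun t => |avgf ξ t|) :=
    fun ξ => bddAbove_range_of_le (fun t => havgb ξ t)
  set D : (Fin M → Bool) → ℝ := fun ξ => sSup (Set.range fun t => |avgf ξ t|) with hD
  set Eav : (Fin M → Bool) → ℝ := fun ξ => sSup (Set.range (avgf ξ)) with hEav
  have ht0 : ∀ ξ, avgf ξ ⟨(0, 0), by simp⟩ = 0 := by
    intro ξ
    rw [havgf]
    simp [hnrn]
  have hEav0 : ∀ ξ, 0 ≤ Eav ξ := by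
    intro ξ
    have h := le_csSup (havg_bdd ξ) ⟨⟨(0, 0), by simp⟩, rfl⟩
    rw [ht0 ξ] at h
    exact h
  -- claim 2 : D ≤ Eav ξ + Eav (neg ξ)
  have hsgneg : ∀ (ξ : Fin M → Bool) i, sg (fun i => !ξ i) i = -sg ξ i := by
    intro ξ i; cases h : ξ i <;> simp [sg, h]
  have havgneg : ∀ ξ (t : T), avgf (fun i => !ξ i) t = -avgf ξ t := by
    intro ξ t
    rw [havgf]
    simp only
    rw [← Finset.sum_neg_distrib]
    apply Finset.sum_congr rfl
    intro i _
    rw [hsgneg]; ring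
  have claim2 : ∀ ξ, D ξ ≤ Eav ξ + Eav (fun i => !ξ i) := by
    intro ξ
    apply csSup_le (Set.range_nonempty _)
    rintro _ ⟨t, rfl⟩
    show |avgf ξ t| ≤ Eav ξ + Eav (fun i => !ξ i)
    rcases le_total 0 (avgf ξ t) with h | h
    · rw [abs_of_nonneg h]
      have h1 : avgf ξ t ≤ Eav ξ := le_csSup (havg_bdd ξ) ⟨t, rfl⟩
      linarith [hEav0 (fun i => !ξ i)]
    · rw [abs_of_nonpos h]
      have h1 : avgf (fun i => !ξ i) t ≤ Eav (fun i => !ξ i) :=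
        le_csSup (havg_bdd _) ⟨t, rfl⟩
      rw [havgneg] at h1
      linarith [hEav0 ξ]
  -- claim 3 : flip-sum invariance
  have hneginv : Function.Involutive (fun (ξ : Fin M → Bool) => (fun i => !ξ i)) := by
    intro ξ; funext i; simp
  have claim3 : ∑ ξ : Fin M → Bool, Eav (fun i => !ξ i) = ∑ ξ, Eav ξ :=
    Fintype.sum_bijective _ hneginv.bijective _ _ (fun ξ => rfl)
  -- per-group-element neuron sups
  set c : G → (Fin M → Bool) → ℝ :=
    fun g ξ => sSup (Set.range fun t : T => ∑ i, sg ξ i * max (nrn g t.1 i) 0) with hc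
  set lin : G → (Fin M → Bool) → ℝ :=
    fun g ξ => sSup (Set.range fun t : T => ∑ i, sg ξ i * nrn g t.1 i) with hlin2
  have hsumb : ∀ (g : G) ξ (t : T) (m : Fin M → ℝ), (∀ i, |m i| ≤ 1) →
      |∑ i, sg ξ i * m i| ≤ M := by
    intro g ξ t m hm
    calc |∑ i, sg ξ i * m i| ≤ ∑ i, |sg ξ i * m i| := Finset.abs_sum_le_sum_abs _ _
      _ ≤ ∑ _i : Fin M, (1:ℝ) := by
          apply Finset.sum_le_sum; intro i _
          rw [abs_mul, sg_abs, one_mul]; exact hm i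
      _ = (M : ℝ) := by simp
  have hc_bdd : ∀ g ξ, BddAbove (Set.range fun t : T => ∑ i, sg ξ i * max (nrn g t.1 i) 0) :=
    fun g ξ => bddAbove_range_of_le (C := (M:ℝ)) (fun t =>
      (abs_le.1 (hsumb g ξ t _ (fun i => hrelub g t i))).2)
  have hlin_bdd : ∀ g ξ, BddAbove (Set.range fun t : T => ∑ i, sg ξ i * nrn g t.1 i) :=
    fun g ξ => bddAbove_range_of_le (C := (M:ℝ)) (fun t =>
      (abs_le.1 (hsumb g ξ t _ (fun i => hnrnb g t i))).2)
  -- claim 4 : Eav ≤ avg of per-g sups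
  have claim4 : ∀ ξ, Eav ξ ≤ (Fintype.card G : ℝ)⁻¹ * ∑ g, c g ξ := by
    intro ξ
    apply csSup_le (Set.range_nonempty _)
    rintro _ ⟨t, rfl⟩
    have heq : avgf ξ t
        = (Fintype.card G : ℝ)⁻¹ * ∑ g, ∑ i, sg ξ i * max (nrn g t.1 i) 0 := by
      rw [havgf]
      simp only [Finset.mul_sum]
      rw [Finset.sum_comm]
      apply Finset.sum_congr rfl
      intro g _
      apply Finset.sum_congr rfl
      intro i _
      ring
    rw [heq]
    apply mul_le_mul_of_nonneg_left _ (by positivity)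
    apply Finset.sum_le_sum
    intro g _
    exact le_csSup (hc_bdd g ξ) ⟨t, rfl⟩
  -- claim 5 : contraction
  have claim5 : ∀ g : G, ∑ ξ : Fin M → Bool, c g ξ ≤ ∑ ξ : Fin M → Bool, lin g ξ := by
    intro g
    exact contraction (fun i (t : T) => nrn g t.1 i) (fun i t => hnrnb g t i)
      (fun z => max z 0) (fun a b => abs_max_sub_max_le_abs a b 0) (max_self 0)
  -- vertex family
  haveI hKne : Nonempty (Bool × (Fin d ⊕ Unit)) := ⟨(true, Sum.inr ())⟩
  set vert : G → (Bool × (Fin d ⊕ Unit)) → Fin M → ℝ :=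
    fun g κ i => (if κ.1 then (1:ℝ) else -1) * (Sum.elim (fun j => y g i j) (fun _ => 1) κ.2)
    with hvert
  have hvertb : ∀ g κ i, |vert g κ i| ≤ 1 := by
    intro g κ i
    rw [hvert]
    simp only
    rw [abs_mul]
    have h1 : |if κ.1 then (1:ℝ) else -1| = 1 := by split <;> simp
    rw [h1, one_mul]
    rcases κ.2 with j | u
    · simpa using hyb g i j
    · simp
  set mx : G → (Fin M → Bool) → ℝ :=
    fun g ξ => Finset.univ.sup' Finset.univ_nonempty (fun κ => ∑ i, sg ξ i * vert g κ i)
    with hmx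
  -- claim 6 : linear sup over ℓ¹ ball ≤ vertex max
  have claim6 : ∀ g ξ, lin g ξ ≤ mx g ξ := by
    intro g ξ
    apply csSup_le (Set.range_nonempty _)
    rintro _ ⟨t, rfl⟩
    show ∑ i, sg ξ i * nrn g t.1 i ≤ mx g ξ
    have hCj : ∀ j, |∑ i, sg ξ i * y g i j| ≤ mx g ξ := by
      intro j
      have hpos : ∑ i, sg ξ i * vert g (true, Sum.inl j) i = ∑ i, sg ξ i * y g i j := by
        apply Finset.sum_congr rfl; intro i _; rw [hvert]; simp
      have hneg : ∑ i, sg ξ i * vert g (false, Sum.inl j) i = -∑ i, sg ξ i * y g i j := by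
        rw [← Finset.sum_neg_distrib]
        apply Finset.sum_congr rfl; intro i _; rw [hvert]; simp
      have h1 := Finset.le_sup' (fun κ => ∑ i, sg ξ i * vert g κ i)
        (Finset.mem_univ (true, Sum.inl j))
      have h2 := Finset.le_sup' (fun κ => ∑ i, sg ξ i * vert g κ i)
        (Finset.mem_univ (false, Sum.inl j))
      rw [hpos] at h1
      rw [hneg] at h2
      rw [abs_le]
      exact ⟨by linarith, h1⟩
    have hC0 : |∑ i, sg ξ i| ≤ mx g ξ := by
      have hpos : ∑ i, sg ξ i * vert g (true, Sum.inr ()) i = ∑ i, sg ξ i := by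
        apply Finset.sum_congr rfl; intro i _; rw [hvert]; simp
      have hneg : ∑ i, sg ξ i * vert g (false, Sum.inr ()) i = -∑ i, sg ξ i := by
        rw [← Finset.sum_neg_distrib]
        apply Finset.sum_congr rfl; intro i _; rw [hvert]; simp
      have h1 := Finset.le_sup' (fun κ => ∑ i, sg ξ i * vert g κ i)
        (Finset.mem_univ (true, Sum.inr ()))
      have h2 := Finset.le_sup' (fun κ => ∑ i, sg ξ i * vert g κ i)
        (Finset.mem_univ (false, Sum.inr ()))
      rw [hpos] at h1
      rw [hneg] at h2
      rw [abs_le]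
      exact ⟨by linarith, h1⟩
    have hmx0 : 0 ≤ mx g ξ := (abs_nonneg _).trans hC0
    have hdecomp : ∑ i, sg ξ i * nrn g t.1 i
        = (∑ j, t.1.1 j * ∑ i, sg ξ i * y g i j) + t.1.2 * ∑ i, sg ξ i := by
      rw [hnrn]
      simp only [mul_add, Finset.sum_add_distrib, Finset.mul_sum]
      congr 1
      · rw [Finset.sum_comm]
        apply Finset.sum_congr rfl; intro j _
        apply Finset.sum_congr rfl; intro i _; ring
      · apply Finset.sum_congr rfl; intro i _; ring
    rw [hdecomp]
    calc (∑ j, t.1.1 j * ∑ i, sg ξ i * y g i j) + t.1.2 * ∑ i, sg ξ i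
        ≤ (∑ j, |t.1.1 j| * mx g ξ) + |t.1.2| * mx g ξ := by
          apply add_le_add
          · apply Finset.sum_le_sum; intro j _
            calc t.1.1 j * ∑ i, sg ξ i * y g i j
                ≤ |t.1.1 j * ∑ i, sg ξ i * y g i j| := le_abs_self _
              _ = |t.1.1 j| * |∑ i, sg ξ i * y g i j| := abs_mul _ _
              _ ≤ |t.1.1 j| * mx g ξ :=
                  mul_le_mul_of_nonneg_left (hCj j) (abs_nonneg _)
          · calc t.1.2 * ∑ i, sg ξ i ≤ |t.1.2 * ∑ i, sg ξ i| := le_abs_self _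
              _ = |t.1.2| * |∑ i, sg ξ i| := abs_mul _ _
              _ ≤ |t.1.2| * mx g ξ := mul_le_mul_of_nonneg_left hC0 (abs_nonneg _)
      _ = ((∑ j, |t.1.1 j|) + |t.1.2|) * mx g ξ := by rw [← Finset.sum_mul]; ring
      _ ≤ 1 * mx g ξ := mul_le_mul_of_nonneg_right t.2 hmx0
      _ = mx g ξ := one_mul _
  -- claim 7 : Massart
  have hcardK : Fintype.card (Bool × (Fin d ⊕ Unit)) = 2 * d + 2 := by
    simp [Fintype.card_prod, Fintype.card_sum]
    ring
  have claim7 : ∀ g : G, ∑ ξ : Fin M → Bool, mx g ξ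
      ≤ 2 ^ M * Real.sqrt (2 * M * Real.log (2 * d + 2)) := by
    intro g
    have h := massart hM (K := Bool × (Fin d ⊕ Unit)) (by rw [hcardK]; omega)
      (vert g) (hvertb g)
    rw [hcardK] at h
    have hcast : ((2 * d + 2 : ℕ) : ℝ) = 2 * (d:ℝ) + 2 := by push_cast; ring
    rw [hcast] at h
    exact h
  -- claim 1 : reduce the class sup to R * D ξ
  have hD0 : ∀ ξ, 0 ≤ D ξ := by
    intro ξ
    have h := le_csSup (habs_bdd ξ) ⟨Classical.arbitrary T, rfl⟩
    exact le_trans (abs_nonneg _) h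
  have hclsne : (reluClassG (d := d) G R).Nonempty := by
    refine ⟨fun z => ∑ _p : Fin 1, (0:ℝ) * ((Fintype.card G : ℝ)⁻¹ *
      ∑ g : G, max ((∑ j, (0:ℝ) * (g • z) j) + 0) 0), ?_⟩
    exact ⟨1, le_refl 1, fun _ => 0, fun _ _ => 0, fun _ => 0, by simpa using hR, rfl⟩
  have claim1 : ∀ ξ, sSup ((fun f : (Fin d → ℝ) → ℝ =>
      ∑ i, (if ξ i then (1:ℝ) else -1) * f (x i)) '' reluClassG G R) ≤ R * D ξ := by
    intro ξ
    apply csSup_le (hclsne.image _)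
    rintro _ ⟨f, hf, rfl⟩
    obtain ⟨K, hK1, a, w, b, hpath, rfl⟩ := hf
    have hsg : ∀ i, (if ξ i then (1:ℝ) else -1) = sg ξ i := fun i => rfl
    simp only [hsg]
    set val : Fin K → Fin M → ℝ :=
      fun p i => (Fintype.card G : ℝ)⁻¹ * ∑ g, max ((∑ j, w p j * y g i j) + b p) 0
      with hvd
    have stepA : ∑ i, sg ξ i * ((fun z => ∑ p, a p * ((Fintype.card G : ℝ)⁻¹ *
          ∑ g : G, max ((∑ j, w p j * (g • z) j) + b p) 0)) (x i))
        = ∑ p, a p * ∑ i, sg ξ i * val p i := by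
      simp only [Finset.mul_sum]
      rw [Finset.sum_comm]
      apply Finset.sum_congr rfl; intro p _
      apply Finset.sum_congr rfl; intro i _
      rw [hvd]
      simp only [Finset.mul_sum]
      apply Finset.sum_congr rfl; intro g _
      ring
    rw [stepA]
    have stepB : ∀ p : Fin K, a p * ∑ i, sg ξ i * val p i
        ≤ |a p| * ((∑ j, |w p j|) + |b p|) * D ξ := by
      intro p
      set r : ℝ := (∑ j, |w p j|) + |b p| with hrdef
      have hr0 : 0 ≤ r := by positivity
      by_cases hr : r = 0
      · have hsum0 : ∑ j, |w p j| = 0 ∧ |b p| = 0 := by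
          constructor <;>
            nlinarith [abs_nonneg (b p),
              Finset.sum_nonneg (fun j (_ : j ∈ univ) => abs_nonneg (w p j))]
        have hw0 : ∀ j, w p j = 0 := by
          intro j
          have := (Finset.sum_eq_zero_iff_of_nonneg
            (fun j (_ : j ∈ univ) => abs_nonneg (w p j))).1 hsum0.1 j (mem_univ j)
          exact abs_eq_zero.1 this
        have hb0 : b p = 0 := abs_eq_zero.1 hsum0.2
        have hval0 : ∀ i, val p i = 0 := by
          intro i; rw [hvd]; simp [hw0, hb0]
        simp [hval0, hr, hrdef]
      · have hrpos : 0 < r := lt_of_le_of_ne hr0 (Ne.symm hr)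
        have hmem : (∑ j, |r⁻¹ * w p j|) + |r⁻¹ * b p| ≤ 1 := by
          simp only [abs_mul, abs_of_nonneg (inv_nonneg.2 hr0)]
          rw [← Finset.mul_sum, ← mul_add, ← hrdef, inv_mul_cancel₀ hr]
        set t : T := ⟨(fun j => r⁻¹ * w p j, r⁻¹ * b p), hmem⟩ with htdef
        have hnrn_t : ∀ (g : G) (i : Fin M),
            nrn g t.1 i = r⁻¹ * ((∑ j, w p j * y g i j) + b p) := by
          intro g i
          rw [hnrn, htdef]
          simp only
          rw [mul_add, Finset.mul_sum]
          apply congrArg₂ _ _ rfl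
          apply Finset.sum_congr rfl; intro j _; ring
        have hmaxt : ∀ (g : G) (i : Fin M),
            max (nrn g t.1 i) 0 = r⁻¹ * max ((∑ j, w p j * y g i j) + b p) 0 := by
          intro g i
          rw [hnrn_t g i]
          rcases le_total ((∑ j, w p j * y g i j) + b p) 0 with h | h
          · rw [max_eq_right h, max_eq_right, mul_zero]
            exact mul_nonpos_of_nonneg_of_nonpos (inv_nonneg.2 hr0) h
          · rw [max_eq_left h, max_eq_left (mul_nonneg (inv_nonneg.2 hr0) h)]
        have hvalt : avgf ξ t = r⁻¹ * ∑ i, sg ξ i * val p i := by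
          rw [havgf]
          simp only [hmaxt]
          rw [Finset.mul_sum]
          apply Finset.sum_congr rfl; intro i _
          rw [hvd]
          simp only [← Finset.mul_sum]
          ring
        have hsum_eq : ∑ i, sg ξ i * val p i = r * avgf ξ t := by
          rw [hvalt, ← mul_assoc, mul_inv_cancel₀ hr, one_mul]
        rw [hsum_eq]
        calc a p * (r * avgf ξ t) ≤ |a p * (r * avgf ξ t)| := le_abs_self _
          _ = |a p| * (r * |avgf ξ t|) := by
              rw [abs_mul, abs_mul, abs_of_nonneg hr0]
          _ ≤ |a p| * (r * D ξ) := by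
              apply mul_le_mul_of_nonneg_left _ (abs_nonneg _)
              apply mul_le_mul_of_nonneg_left _ hr0
              exact le_csSup (habs_bdd ξ) ⟨t, rfl⟩
          _ = |a p| * r * D ξ := by ring
    calc ∑ p, a p * ∑ i, sg ξ i * val p i
        ≤ ∑ p, |a p| * ((∑ j, |w p j|) + |b p|) * D ξ := Finset.sum_le_sum (fun p _ => stepB p)
      _ = (∑ p, |a p| * ((∑ j, |w p j|) + |b p|)) * D ξ := by rw [← Finset.sum_mul]
      _ ≤ R * D ξ := mul_le_mul_of_nonneg_right hpath (hD0 ξ)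
  -- assemble everything
  set B : ℝ := 2 ^ M * Real.sqrt (2 * M * Real.log (2 * (d:ℝ) + 2)) with hB
  have hlogL : 0 ≤ Real.log (2 * (d:ℝ) + 2) := by
    apply Real.log_nonneg
    have : (0:ℝ) ≤ (d:ℝ) := Nat.cast_nonneg d
    linarith
  have hB0 : 0 ≤ B := by rw [hB]; positivity
  have hEB : ∑ ξ : Fin M → Bool, Eav ξ ≤ B := by
    have h1 : ∑ ξ : Fin M → Bool, Eav ξ
        ≤ ∑ ξ : Fin M → Bool, (Fintype.card G : ℝ)⁻¹ * ∑ g, c g ξ :=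
      Finset.sum_le_sum (fun ξ _ => claim4 ξ)
    have h2 : ∑ ξ : Fin M → Bool, (Fintype.card G : ℝ)⁻¹ * ∑ g, c g ξ
        = (Fintype.card G : ℝ)⁻¹ * ∑ g, ∑ ξ : Fin M → Bool, c g ξ := by
      rw [← Finset.mul_sum, Finset.sum_comm]
    have h3 : ∑ g : G, ∑ ξ : Fin M → Bool, c g ξ ≤ ∑ g : G, ∑ ξ : Fin M → Bool, lin g ξ :=
      Finset.sum_le_sum (fun g _ => claim5 g)
    have h4 : ∑ g : G, ∑ ξ : Fin M → Bool, lin g ξ ≤ ∑ g : G, ∑ ξ : Fin M → Bool, mx g ξ :=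
      Finset.sum_le_sum (fun g _ => Finset.sum_le_sum (fun ξ _ => claim6 g ξ))
    have h5 : ∑ g : G, ∑ ξ : Fin M → Bool, mx g ξ ≤ (Fintype.card G : ℝ) * B := by
      calc ∑ g : G, ∑ ξ : Fin M → Bool, mx g ξ ≤ ∑ _g : G, B := by
            apply Finset.sum_le_sum
            intro g _
            rw [hB]
            exact claim7 g
        _ = (Fintype.card G : ℝ) * B := by rw [Finset.sum_const, card_univ, nsmul_eq_mul]
    calc ∑ ξ : Fin M → Bool, Eav ξ
        ≤ (Fintype.card G : ℝ)⁻¹ * ∑ g, ∑ ξ : Fin M → Bool, c g ξ := by rw [← h2]; exact h1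
      _ ≤ (Fintype.card G : ℝ)⁻¹ * ((Fintype.card G : ℝ) * B) := by
          apply mul_le_mul_of_nonneg_left _ (by positivity)
          exact le_trans h3 (le_trans h4 h5)
      _ = B := by field_simp
  have hDB : ∑ ξ : Fin M → Bool, D ξ ≤ 2 * B := by
    calc ∑ ξ : Fin M → Bool, D ξ
        ≤ ∑ ξ : Fin M → Bool, (Eav ξ + Eav (fun i => !ξ i)) :=
          Finset.sum_le_sum (fun ξ _ => claim2 ξ)
      _ = ∑ ξ : Fin M → Bool, Eav ξ + ∑ ξ : Fin M → Bool, Eav (fun i => !ξ i) :=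
          Finset.sum_add_distrib
      _ = 2 * ∑ ξ : Fin M → Bool, Eav ξ := by rw [claim3]; ring
      _ ≤ 2 * B := by linarith [hEB]
  have hsum1 : ∑ ξ : Fin M → Bool, sSup ((fun f : (Fin d → ℝ) → ℝ =>
      ∑ i, (if ξ i then (1:ℝ) else -1) * f (x i)) '' reluClassG G R) ≤ R * (2 * B) := by
    calc ∑ ξ : Fin M → Bool, sSup ((fun f : (Fin d → ℝ) → ℝ =>
          ∑ i, (if ξ i then (1:ℝ) else -1) * f (x i)) '' reluClassG G R)
        ≤ ∑ ξ : Fin M → Bool, R * D ξ := Finset.sum_le_sum (fun ξ _ => claim1 ξ)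
      _ = R * ∑ ξ : Fin M → Bool, D ξ := by rw [Finset.mul_sum]
      _ ≤ R * (2 * B) := mul_le_mul_of_nonneg_left hDB hR
  have hsqrt : Real.sqrt (2 * M * Real.log (2 * (d:ℝ) + 2)) / M
      = Real.sqrt (2 * Real.log (2 * (d:ℝ) + 2) / M) := by
    rw [show 2 * Real.log (2 * (d:ℝ) + 2) / M
        = (2 * M * Real.log (2 * (d:ℝ) + 2)) / (M:ℝ)^2 by field_simp]
    rw [Real.sqrt_div (by positivity), Real.sqrt_sq hMR.le]
  show (M : ℝ)⁻¹ * ((2 ^ M : ℝ)⁻¹ * ∑ ξ : Fin M → Bool,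
      sSup ((fun f : (Fin d → ℝ) → ℝ =>
        ∑ i, (if ξ i then (1 : ℝ) else -1) * f (x i)) '' reluClassG G R))
      ≤ 2 * Real.sqrt 2 * R * Real.sqrt (2 * Real.log (2 * d + 2) / M)
  have hfinal : (M : ℝ)⁻¹ * ((2 ^ M : ℝ)⁻¹ * ∑ ξ : Fin M → Bool,
      sSup ((fun f : (Fin d → ℝ) → ℝ =>
        ∑ i, (if ξ i then (1 : ℝ) else -1) * f (x i)) '' reluClassG G R))
      ≤ 2 * R * Real.sqrt (2 * Real.log (2 * (d:ℝ) + 2) / M) := by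
    calc (M : ℝ)⁻¹ * ((2 ^ M : ℝ)⁻¹ * ∑ ξ : Fin M → Bool,
        sSup ((fun f : (Fin d → ℝ) → ℝ =>
          ∑ i, (if ξ i then (1 : ℝ) else -1) * f (x i)) '' reluClassG G R))
        ≤ (M : ℝ)⁻¹ * ((2 ^ M : ℝ)⁻¹ * (R * (2 * B))) := by
          apply mul_le_mul_of_nonneg_left _ (by positivity)
          exact mul_le_mul_of_nonneg_left hsum1 (by positivity)
      _ = 2 * R * (Real.sqrt (2 * M * Real.log (2 * (d:ℝ) + 2)) / M) := by
          rw [hB]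
          field_simp
      _ = 2 * R * Real.sqrt (2 * Real.log (2 * (d:ℝ) + 2) / M) := by rw [hsqrt]
  have hs2 : (1:ℝ) ≤ Real.sqrt 2 := by
    rw [show (1:ℝ) = Real.sqrt 1 by simp]
    exact Real.sqrt_le_sqrt (by norm_num)
  have hsq0 : 0 ≤ Real.sqrt (2 * Real.log (2 * (d:ℝ) + 2) / M) := Real.sqrt_nonneg _
  nlinarith [hfinal, mul_nonneg hR hsq0]
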